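/- Fix p ≥ q ≥ 1, a nonempty subset Π₀ of M₀ = {(p-i+1, p+i) : i=1,...,q}, and let B₁ = B₀ △ (⋃_{π∈Π₀} π) where B₀ = [p]. Let R = B₁ ∩ [p+1..p+q] and ℬ = {A ⊆ [p+q] : |A| = p, A ∩ [p+1..p+q] = R}. Define 𝒜 = {B₀} ∪ {A ∈ ℬ : Σ(A) - Σ(B₁) odd} and 𝒜' = {A ∈ ℬ : Σ(A) - Σ(B₁) even}. Then the pair 𝒜, 𝒜' is balanced: every matching M in [p+q] is a feasible matching for equally many members of 𝒜 as of 𝒜'. -/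

import Mathlib

open Finset

/-- The two-element set of endpoints of an arc `π = (i,j)`. -/
def arcSet (π : ℕ × ℕ) : Finset ℕ := {π.1, π.2}

/-- `M` is a feasible matching for the `p`-subset `A` of `[p+q] = {1,…,p+q}`:
`q` pairwise disjoint nested arcs `(i,j)`, `i<j`, each containing exactly one element
of `A` and one of its complement, with no free element covered by an arc's interval. -/
def IsFeasibleMatching (p q : ℕ) (A : Finset ℕ) (M : Finset (ℕ × ℕ)) : Prop :=
  M.card = q ∧
  (∀ π ∈ M, 1 ≤ π.1 ∧ π.1 < π.2 ∧ π.2 ≤ p + q) ∧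
  (∀ π ∈ M, ∀ π' ∈ M, π ≠ π' → Disjoint (arcSet π) (arcSet π')) ∧
  (∀ π ∈ M, (arcSet π ∩ A).card = 1 ∧
            (arcSet π ∩ (Finset.Icc 1 (p + q) \ A)).card = 1) ∧
  (∀ π ∈ M, ∀ π' ∈ M,
      Disjoint (Finset.Icc π.1 π.2) (Finset.Icc π'.1 π'.2) ∨
      Finset.Icc π.1 π.2 ⊆ Finset.Icc π'.1 π'.2 ∨
      Finset.Icc π'.1 π'.2 ⊆ Finset.Icc π.1 π.2) ∧
  (∀ k ∈ Finset.Icc 1 (p + q), (∀ π ∈ M, k ∉ arcSet π) →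
      ∀ π ∈ M, k ∉ Finset.Icc π.1 π.2)

open Classical in
/-- The number of members of the collection `𝒜` for which `M` is a feasible matching. -/
noncomputable def feasCount (p q : ℕ) (𝒜 : Finset (Finset ℕ)) (M : Finset (ℕ × ℕ)) : ℕ :=
  (𝒜.filter (fun A => IsFeasibleMatching p q A M)).card

/-- Two collections of `p`-subsets of `[p+q]` are balanced if every matching is a
feasible matching for equally many members of each. -/
def BalancedPair (p q : ℕ) (𝒜 𝒜' : Finset (Finset ℕ)) : Prop :=
  ∀ M : Finset (ℕ × ℕ), feasCount p q 𝒜 M = feasCount p q 𝒜' M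

/- ## Auxiliary lemmas -/

lemma sum_symmDiff_par (s t : Finset ℕ) :
    (∑ x ∈ symmDiff s t, x) + 2 * ∑ x ∈ s ∩ t, x = (∑ x ∈ s, x) + ∑ x ∈ t, x := by
  have hst : symmDiff s t ∪ s ∩ t = s ∪ t := symmDiff_sup_inf s t
  have hd : Disjoint (symmDiff s t) (s ∩ t) := disjoint_symmDiff_inf s t
  have h1 : (∑ x ∈ symmDiff s t, x) + ∑ x ∈ s ∩ t, x = ∑ x ∈ s ∪ t, x := by
    rw [← Finset.sum_union hd, hst]
  have h2 := Finset.sum_union_inter (s₁ := s) (s₂ := t) (f := fun x => x)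
  omega

lemma card_symmDiff_par (s t : Finset ℕ) :
    (symmDiff s t).card + 2 * (s ∩ t).card = s.card + t.card := by
  have hst : symmDiff s t ∪ s ∩ t = s ∪ t := symmDiff_sup_inf s t
  have hd : Disjoint (symmDiff s t) (s ∩ t) := disjoint_symmDiff_inf s t
  have h1 : (symmDiff s t).card + (s ∩ t).card = (s ∪ t).card := by
    rw [← Finset.card_union_of_disjoint hd, hst]
  have h2 := Finset.card_union_add_card_inter s t
  omega

lemma pair_inter_card {a b : ℕ} (A : Finset ℕ) (hab : a ≠ b) :
    ((({a, b} : Finset ℕ) ∩ A).card = 1) ↔ (a ∈ A ↔ b ∉ A) := by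
  by_cases ha : a ∈ A <;> by_cases hb : b ∈ A <;>
    simp [Finset.insert_inter_of_mem, Finset.insert_inter_of_notMem,
      Finset.singleton_inter_of_mem, Finset.singleton_inter_of_notMem, ha, hb, hab,
      Finset.card_insert_of_notMem]

lemma arcSet_subset_Icc {π : ℕ × ℕ} (h : π.1 ≤ π.2) : arcSet π ⊆ Finset.Icc π.1 π.2 := by
  intro x hx
  simp only [arcSet, mem_insert, mem_singleton] at hx
  rcases hx with rfl | rfl <;> simp [Finset.mem_Icc, h]

lemma arcSet_card {π : ℕ × ℕ} (h : π.1 ≠ π.2) : (arcSet π).card = 2 := by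
  simp [arcSet, h]

lemma oddArc {p q : ℕ} {M : Finset (ℕ × ℕ)}
    (h2 : ∀ π ∈ M, 1 ≤ π.1 ∧ π.1 < π.2 ∧ π.2 ≤ p + q)
    (h3 : ∀ π ∈ M, ∀ π' ∈ M, π ≠ π' → Disjoint (arcSet π) (arcSet π'))
    (h5 : ∀ π ∈ M, ∀ π' ∈ M,
      Disjoint (Finset.Icc π.1 π.2) (Finset.Icc π'.1 π'.2) ∨
      Finset.Icc π.1 π.2 ⊆ Finset.Icc π'.1 π'.2 ∨
      Finset.Icc π'.1 π'.2 ⊆ Finset.Icc π.1 π.2)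
    (h6 : ∀ k ∈ Finset.Icc 1 (p + q), (∀ π ∈ M, k ∉ arcSet π) →
      ∀ π ∈ M, k ∉ Finset.Icc π.1 π.2) :
    ∀ π ∈ M, Odd (π.1 + π.2) := by
  intro π hπ
  obtain ⟨hπ1, hπ12, hπ2⟩ := h2 π hπ
  set S := M.filter (fun π' => Finset.Icc π'.1 π'.2 ⊆ Finset.Icc π.1 π.2) with hS
  have hIcc : Finset.Icc π.1 π.2 = S.biUnion arcSet := by
    apply Finset.Subset.antisymm
    · intro k hk
      have hk1 : k ∈ Finset.Icc 1 (p + q) := by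
        simp only [Finset.mem_Icc] at hk ⊢; omega
      have hex : ∃ π' ∈ M, k ∈ arcSet π' := by
        by_contra hc
        push_neg at hc
        exact (h6 k hk1 hc π hπ) hk
      obtain ⟨π', hπ', hkarc⟩ := hex
      have hle : π'.1 ≤ π'.2 := le_of_lt (h2 π' hπ').2.1
      have hsub : Finset.Icc π'.1 π'.2 ⊆ Finset.Icc π.1 π.2 := by
        rcases h5 π' hπ' π hπ with hd | hs | hs
        · exact absurd hk (Finset.disjoint_left.mp hd (arcSet_subset_Icc hle hkarc))
        · exact hs
        · have heq : π = π' := by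
            by_contra hne
            have hd := h3 π hπ π' hπ' hne
            simp only [arcSet, mem_insert, mem_singleton] at hkarc
            simp only [Finset.mem_Icc] at hk
            have h1mem : π.1 ∈ Finset.Icc π'.1 π'.2 := hs (by simp [Finset.mem_Icc]; omega)
            have h2mem : π.2 ∈ Finset.Icc π'.1 π'.2 := hs (by simp [Finset.mem_Icc]; omega)
            simp only [Finset.mem_Icc] at h1mem h2mem
            rcases hkarc with rfl | rfl
            · have he : π.1 = π'.1 := by omega
              exact Finset.disjoint_left.mp hd
                (show π.1 ∈ arcSet π by simp [arcSet])
                (show π.1 ∈ arcSet π' by simp only [arcSet, mem_insert, mem_singleton]; omega)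
            · have he : π.2 = π'.2 := by omega
              exact Finset.disjoint_left.mp hd
                (show π.2 ∈ arcSet π by simp [arcSet])
                (show π.2 ∈ arcSet π' by simp only [arcSet, mem_insert, mem_singleton]; omega)
          subst heq; exact Finset.Subset.refl _
      exact Finset.mem_biUnion.mpr ⟨π', Finset.mem_filter.mpr ⟨hπ', hsub⟩, hkarc⟩
    · intro k hk
      obtain ⟨π', hπ', hkarc⟩ := Finset.mem_biUnion.mp hk
      have := Finset.mem_filter.mp hπ'
      exact this.2 (arcSet_subset_Icc (le_of_lt (h2 π' this.1).2.1) hkarc)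
  have hcard : (Finset.Icc π.1 π.2).card = 2 * S.card := by
    rw [hIcc, Finset.card_biUnion]
    · rw [Finset.sum_congr rfl
        (fun π' hπ' => arcSet_card (ne_of_lt (h2 π' (Finset.mem_filter.mp hπ').1).2.1))]
      simp [mul_comm, S]
    · intro a ha b hb hab
      exact h3 a (Finset.mem_filter.mp ha).1 b (Finset.mem_filter.mp hb).1 hab
  rw [Nat.card_Icc] at hcard
  exact ⟨π.1 + S.card - 1, by omega⟩

lemma flip_feas {p q : ℕ} {M : Finset (ℕ × ℕ)} {π₀ : ℕ × ℕ} (hπ₀ : π₀ ∈ M) {A : Finset ℕ}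
    (hFe : IsFeasibleMatching p q A M) :
    IsFeasibleMatching p q (symmDiff A (arcSet π₀)) M := by
  obtain ⟨c1, c2, c3, c4, c5, c6⟩ := hFe
  refine ⟨c1, c2, c3, ?_, c5, c6⟩
  intro π hπ
  have hne : π₀.1 ≠ π₀.2 := ne_of_lt (c2 π₀ hπ₀).2.1
  by_cases hpi : π = π₀
  · subst hpi
    have h1 := (pair_inter_card A hne).mp (c4 π hπ).1
    have hm1 : π.1 ∈ symmDiff A (arcSet π) ↔ π.1 ∉ A := by
      rw [Finset.mem_symmDiff]
      have : π.1 ∈ arcSet π := by simp [arcSet]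
      tauto
    have hm2 : π.2 ∈ symmDiff A (arcSet π) ↔ π.2 ∉ A := by
      rw [Finset.mem_symmDiff]
      have : π.2 ∈ arcSet π := by simp [arcSet]
      tauto
    have hI1 : π.1 ∈ Finset.Icc 1 (p + q) := by
      have := c2 π hπ; simp [Finset.mem_Icc]; omega
    have hI2 : π.2 ∈ Finset.Icc 1 (p + q) := by
      have := c2 π hπ; simp [Finset.mem_Icc]; omega
    constructor
    · rw [show (arcSet π : Finset ℕ) = {π.1, π.2} from rfl, pair_inter_card _ hne]
      tauto
    · rw [show (arcSet π : Finset ℕ) = {π.1, π.2} from rfl, pair_inter_card _ hne]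
      simp only [Finset.mem_sdiff, hI1, hI2, true_and]
      tauto
  · have hdisj := c3 π hπ π₀ hπ₀ hpi
    have hnot : ∀ x ∈ arcSet π, x ∉ arcSet π₀ := fun x hx => Finset.disjoint_left.mp hdisj hx
    have e1 : arcSet π ∩ (symmDiff A (arcSet π₀)) = arcSet π ∩ A := by
      ext x
      simp only [Finset.mem_inter, Finset.mem_symmDiff]
      constructor
      · rintro ⟨hx, h⟩; exact ⟨hx, by have := hnot x hx; tauto⟩
      · rintro ⟨hx, h⟩; exact ⟨hx, by have := hnot x hx; tauto⟩
    have e2 : arcSet π ∩ (Finset.Icc 1 (p + q) \ symmDiff A (arcSet π₀)) =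
        arcSet π ∩ (Finset.Icc 1 (p + q) \ A) := by
      ext x
      simp only [Finset.mem_inter, Finset.mem_sdiff, Finset.mem_symmDiff]
      constructor
      · rintro ⟨hx, hI, h⟩; exact ⟨hx, hI, by have := hnot x hx; tauto⟩
      · rintro ⟨hx, hI, h⟩; exact ⟨hx, hI, by have := hnot x hx; tauto⟩
    rw [e1, e2]; exact c4 π hπ

lemma freeMem {p q : ℕ} {M : Finset (ℕ × ℕ)} {A : Finset ℕ}
    (hA : A ⊆ Finset.Icc 1 (p + q)) (hcardA : A.card = p) (hMcard : M.card = q)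
    (h3 : ∀ π ∈ M, ∀ π' ∈ M, π ≠ π' → Disjoint (arcSet π) (arcSet π'))
    (hc4 : ∀ π ∈ M, (arcSet π ∩ (Finset.Icc 1 (p + q) \ A)).card = 1) :
    ∀ k ∈ Finset.Icc 1 (p + q), (∀ π ∈ M, k ∉ arcSet π) → k ∈ A := by
  intro k hk hfree
  set C := Finset.Icc 1 (p + q) \ A with hC
  have hCcard : C.card = q := by
    rw [hC, Finset.card_sdiff_of_subset hA, hcardA, Nat.card_Icc]
    omega
  set D := M.biUnion (fun π => arcSet π ∩ C) with hD
  have hDC : D ⊆ C := by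
    intro x hx
    obtain ⟨π, hπ, hx⟩ := Finset.mem_biUnion.mp hx
    exact (Finset.mem_inter.mp hx).2
  have hDcard : D.card = q := by
    rw [hD, Finset.card_biUnion]
    · rw [Finset.sum_congr rfl (fun π hπ => hc4 π hπ)]
      simp [hMcard]
    · intro a ha b hb hab
      exact Finset.disjoint_of_subset_left Finset.inter_subset_left
        (Finset.disjoint_of_subset_right Finset.inter_subset_left (h3 a ha b hb hab))
  have hCD : C = D := (Finset.eq_of_subset_of_card_le hDC (by omega)).symm
  by_contra hkA
  have hkC : k ∈ C := Finset.mem_sdiff.mpr ⟨hk, hkA⟩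
  rw [hCD] at hkC
  obtain ⟨π, hπ, hx⟩ := Finset.mem_biUnion.mp hkC
  exact hfree π hπ (Finset.mem_inter.mp hx).1

lemma mem_arcSet_iff {x : ℕ} {π : ℕ × ℕ} : x ∈ arcSet π ↔ x = π.1 ∨ x = π.2 := by
  simp [arcSet]

/-- For a nonempty `Π₀ ⊆ M₀ = {(p-i+1,p+i) : i=1,…,q}`, with `B₀ = [p]`,
`B₁ = B₀ △ ⋃Π₀`, `R = B₁ ∩ [p+1..p+q]`, and
`ℬ = {A ⊆ [p+q] : |A| = p, A ∩ [p+1..p+q] = R}`, the collections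
`𝒜 = {B₀} ∪ {A ∈ ℬ : Σ(A) - Σ(B₁) odd}` and `𝒜' = {A ∈ ℬ : Σ(A) - Σ(B₁) even}`
are balanced.  (Parity of `Σ(A) - Σ(B₁)` is expressed via parity of `Σ(A) + Σ(B₁)`.) -/
theorem stmt9 (p q : ℕ) (hq : 1 ≤ q) (hpq : q ≤ p)
    (P0 : Finset (ℕ × ℕ))
    (hP0 : P0 ⊆ (Finset.Icc 1 q).image (fun i => (p - i + 1, p + i)))
    (hP0ne : P0.Nonempty)
    (B0 B1 R : Finset ℕ) (ℬ : Finset (Finset ℕ))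
    (hB0 : B0 = Finset.Icc 1 p)
    (hB1 : B1 = symmDiff B0 (P0.biUnion arcSet))
    (hR : R = B1 ∩ Finset.Icc (p + 1) (p + q))
    (hℬ : ℬ = (Finset.Icc 1 (p + q)).powerset.filter
        (fun A => A.card = p ∧ A ∩ Finset.Icc (p + 1) (p + q) = R)) :
    BalancedPair p q
      (insert B0 (ℬ.filter (fun A => Odd ((∑ a ∈ A, a) + ∑ b ∈ B1, b))))
      (ℬ.filter (fun A => ¬ Odd ((∑ a ∈ A, a) + ∑ b ∈ B1, b))) := by
  classical
  intro M
  unfold feasCount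
  by_cases hval : M.card = q ∧
      (∀ π ∈ M, 1 ≤ π.1 ∧ π.1 < π.2 ∧ π.2 ≤ p + q) ∧
      (∀ π ∈ M, ∀ π' ∈ M, π ≠ π' → Disjoint (arcSet π) (arcSet π')) ∧
      (∀ π ∈ M, ∀ π' ∈ M,
        Disjoint (Finset.Icc π.1 π.2) (Finset.Icc π'.1 π'.2) ∨
        Finset.Icc π.1 π.2 ⊆ Finset.Icc π'.1 π'.2 ∨
        Finset.Icc π'.1 π'.2 ⊆ Finset.Icc π.1 π.2) ∧
      (∀ k ∈ Finset.Icc 1 (p + q), (∀ π ∈ M, k ∉ arcSet π) →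
        ∀ π ∈ M, k ∉ Finset.Icc π.1 π.2)
  swap
  · have hnofe : ∀ A : Finset ℕ, ¬ IsFeasibleMatching p q A M := by
      intro A hFe
      exact hval ⟨hFe.1, hFe.2.1, hFe.2.2.1, hFe.2.2.2.2.1, hFe.2.2.2.2.2⟩
    have hemp : ∀ S : Finset (Finset ℕ),
        S.filter (fun A => IsFeasibleMatching p q A M) = ∅ :=
      fun S => Finset.filter_false_of_mem (fun A _ => hnofe A)
    simp only [hemp]
  obtain ⟨c1, c2, c3, c5, c6⟩ := hval
  have hodd := oddArc c2 c3 c5 c6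
  -- membership in ℬ unfolded
  have hmemℬ : ∀ A : Finset ℕ, A ∈ ℬ ↔
      A ⊆ Finset.Icc 1 (p + q) ∧ A.card = p ∧
      A ∩ Finset.Icc (p + 1) (p + q) = R := by
    intro A
    rw [hℬ]
    simp only [Finset.mem_filter, Finset.mem_powerset]
  by_cases hbb : ∃ π ∈ M, π.2 ≤ p
  · -- Case 1 : some arc lies entirely in the bottom part
    obtain ⟨π₀, hπ₀M, hπ₀p⟩ := hbb
    obtain ⟨hπ₀1, hπ₀12, hπ₀2⟩ := c2 π₀ hπ₀M
    have hne : π₀.1 ≠ π₀.2 := ne_of_lt hπ₀12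
    have hsodd : (π₀.1 + π₀.2) % 2 = 1 := Nat.odd_iff.mp (hodd π₀ hπ₀M)
    have hsum_s : ∑ x ∈ arcSet π₀, x = π₀.1 + π₀.2 := Finset.sum_pair hne
    have hsub_s : arcSet π₀ ⊆ Finset.Icc 1 p := by
      intro x hx
      simp only [arcSet, mem_insert, mem_singleton] at hx
      rcases hx with rfl | rfl <;> (simp only [Finset.mem_Icc]; omega)
    have hB0nf : ¬ IsFeasibleMatching p q B0 M := by
      intro hFe
      have h1 := (hFe.2.2.2.1 π₀ hπ₀M).1
      rw [show (arcSet π₀ : Finset ℕ) = {π₀.1, π₀.2} from rfl, pair_inter_card _ hne] at h1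
      have hm1 : π₀.1 ∈ B0 := by rw [hB0]; simp only [Finset.mem_Icc]; omega
      have hm2 : π₀.2 ∈ B0 := by rw [hB0]; simp only [Finset.mem_Icc]; omega
      tauto
    rw [Finset.filter_insert, if_neg hB0nf]
    -- key transport
    have key : ∀ A : Finset ℕ, A ∈ ℬ → IsFeasibleMatching p q A M →
        (symmDiff A (arcSet π₀) ∈ ℬ ∧
         IsFeasibleMatching p q (symmDiff A (arcSet π₀)) M ∧
         (Odd ((∑ a ∈ symmDiff A (arcSet π₀), a) + ∑ b ∈ B1, b) ↔
          ¬ Odd ((∑ a ∈ A, a) + ∑ b ∈ B1, b))) := by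
      intro A hAℬ hFe
      obtain ⟨hAsub, hAcard, hAtop⟩ := (hmemℬ A).mp hAℬ
      have hinter : (A ∩ arcSet π₀).card = 1 := by
        rw [Finset.inter_comm]; exact (hFe.2.2.2.1 π₀ hπ₀M).1
      refine ⟨?_, flip_feas hπ₀M hFe, ?_⟩
      · rw [hmemℬ]
        refine ⟨?_, ?_, ?_⟩
        · intro x hx
          rw [Finset.mem_symmDiff] at hx
          rcases hx with ⟨hx, _⟩ | ⟨hx, _⟩
          · exact hAsub hx
          · have := hsub_s hx
            simp only [Finset.mem_Icc] at this ⊢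
            omega
        · have := card_symmDiff_par A (arcSet π₀)
          rw [hinter, hAcard, arcSet_card hne] at this
          omega
        · rw [← hAtop]
          ext x
          simp only [Finset.mem_inter, Finset.mem_symmDiff]
          constructor
          · rintro ⟨hx, hxt⟩
            refine ⟨?_, hxt⟩
            have hxs : x ∉ arcSet π₀ := by
              intro hxs
              have := hsub_s hxs
              simp only [Finset.mem_Icc] at this hxt
              omega
            tauto
          · rintro ⟨hx, hxt⟩
            refine ⟨?_, hxt⟩
            have hxs : x ∉ arcSet π₀ := by
              intro hxs
              have := hsub_s hxs
              simp only [Finset.mem_Icc] at this hxt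
              omega
            tauto
      · have hps := sum_symmDiff_par A (arcSet π₀)
        rw [hsum_s] at hps
        rw [Nat.odd_iff, Nat.odd_iff]
        omega
    have hinv : ∀ A : Finset ℕ, symmDiff (symmDiff A (arcSet π₀)) (arcSet π₀) = A :=
      fun A => symmDiff_symmDiff_cancel_right (arcSet π₀) A
    apply Finset.card_bij' (i := fun A _ => symmDiff A (arcSet π₀))
      (j := fun A _ => symmDiff A (arcSet π₀))
    · intro A hA
      simp only [Finset.mem_filter] at hA ⊢
      obtain ⟨⟨hAℬ, hApar⟩, hAFe⟩ := hA
      obtain ⟨h1, h2, h3'⟩ := key A hAℬ hAFe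
      exact ⟨⟨h1, by tauto⟩, h2⟩
    · intro A hA
      simp only [Finset.mem_filter] at hA ⊢
      obtain ⟨⟨hAℬ, hApar⟩, hAFe⟩ := hA
      obtain ⟨h1, h2, h3'⟩ := key A hAℬ hAFe
      exact ⟨⟨h1, by tauto⟩, h2⟩
    · intro A _; exact hinv A
    · intro A _; exact hinv A
  · -- Case 2 : all arcs cross
    push_neg at hbb
    have htopcard : (Finset.Icc (p + 1) (p + q)).card = q := by rw [Nat.card_Icc]; omega
    -- Step A : no arc lies entirely in the (Finset.Icc (p + 1) (p + q)) part
    have htop1 : ∀ π ∈ M, π.1 ≤ p := by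
      by_contra hc
      push_neg at hc
      obtain ⟨π₀, hπ₀M, hπ₀1⟩ := hc
      have hdisjf : ∀ a ∈ M, ∀ b ∈ M, a ≠ b →
          Disjoint (arcSet a ∩ (Finset.Icc (p + 1) (p + q))) (arcSet b ∩ (Finset.Icc (p + 1) (p + q))) := by
        intro a ha b hb hab
        exact Finset.disjoint_of_subset_left Finset.inter_subset_left
          (Finset.disjoint_of_subset_right Finset.inter_subset_left (c3 a ha b hb hab))
      have hTsub : M.biUnion (fun π => arcSet π ∩ (Finset.Icc (p + 1) (p + q))) ⊆ (Finset.Icc (p + 1) (p + q)) :=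
        Finset.biUnion_subset.mpr (fun π _ => Finset.inter_subset_right)
      have hTcard : (M.biUnion (fun π => arcSet π ∩ (Finset.Icc (p + 1) (p + q)))).card =
          ∑ π ∈ M, (arcSet π ∩ (Finset.Icc (p + 1) (p + q))).card := Finset.card_biUnion hdisjf
      have hlt : ∑ _π ∈ M, 1 < ∑ π ∈ M, (arcSet π ∩ (Finset.Icc (p + 1) (p + q))).card := by
        apply Finset.sum_lt_sum
        · intro π hπ
          have hc2 := c2 π hπ
          have : π.2 ∈ arcSet π ∩ (Finset.Icc (p + 1) (p + q)) := by
            refine Finset.mem_inter.mpr ⟨mem_arcSet_iff.mpr (Or.inr rfl), ?_⟩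
            simp only [Finset.mem_Icc]
            have := hbb π hπ
            omega
          exact Finset.card_pos.mpr ⟨π.2, this⟩
        · refine ⟨π₀, hπ₀M, ?_⟩
          have hc2 := c2 π₀ hπ₀M
          have he : arcSet π₀ ∩ (Finset.Icc (p + 1) (p + q)) = arcSet π₀ := by
            apply Finset.inter_eq_left.mpr
            intro x hx
            simp only [arcSet, mem_insert, mem_singleton] at hx
            have := hbb π₀ hπ₀M
            rcases hx with rfl | rfl <;> (simp only [Finset.mem_Icc]; omega)
          rw [he, arcSet_card (ne_of_lt hc2.2.1)]
          omega
      rw [Finset.sum_const, smul_eq_mul, mul_one, c1] at hlt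
      have := Finset.card_le_card hTsub
      omega
    have hcross : ∀ π ∈ M, 1 ≤ π.1 ∧ π.1 ≤ p ∧ p + 1 ≤ π.2 ∧ π.2 ≤ p + q := by
      intro π hπ
      have h := c2 π hπ
      have := hbb π hπ
      have := htop1 π hπ
      omega
    have hshare : ∀ π ∈ M, ∀ π' ∈ M, ∀ x, x ∈ arcSet π → x ∈ arcSet π' → π = π' := by
      intro π hπ π' hπ' x hx hx'
      by_contra hne
      exact Finset.disjoint_left.mp (c3 π hπ π' hπ' hne) hx hx'
    have htopeq : (Finset.Icc (p + 1) (p + q)) = M.image (fun π => π.2) := by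
      have hsub : M.image (fun π => π.2) ⊆ (Finset.Icc (p + 1) (p + q)) := by
        intro x hx
        obtain ⟨π, hπ, rfl⟩ := Finset.mem_image.mp hx
        have := hcross π hπ
        simp only [Finset.mem_Icc]
        omega
      have hcard : (M.image (fun π => π.2)).card = q := by
        rw [Finset.card_image_of_injOn, c1]
        intro π hπ π' hπ' he
        have he2 : π.2 = π'.2 := he
        exact hshare π hπ π' hπ' π.2 (mem_arcSet_iff.mpr (Or.inr rfl))
          (mem_arcSet_iff.mpr (Or.inr he2))
      exact (Finset.eq_of_subset_of_card_le hsub (by omega)).symm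
    have hRtop : R ⊆ (Finset.Icc (p + 1) (p + q)) := by rw [hR]; exact Finset.inter_subset_right
    set Mr := M.filter (fun π => π.2 ∈ R) with hMr
    have hMrsub : Mr ⊆ M := Finset.filter_subset _ _
    set U := Mr.biUnion arcSet with hUdef
    set Astar := symmDiff B0 U with hAstar
    have hUmem : ∀ x, x ∈ U → ∃ π ∈ Mr, x = π.1 ∨ x = π.2 := by
      intro x hx
      obtain ⟨π, hπ, hx⟩ := Finset.mem_biUnion.mp hx
      refine ⟨π, hπ, ?_⟩
      simpa only [arcSet, mem_insert, mem_singleton] using hx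
    have hU1 : ∀ π ∈ M, (π.1 ∈ U ↔ π ∈ Mr) := by
      intro π hπ
      constructor
      · intro hx
        obtain ⟨π', hπ', hor⟩ := hUmem π.1 hx
        have : π = π' := hshare π hπ π' (hMrsub hπ') π.1
          (mem_arcSet_iff.mpr (Or.inl rfl)) (mem_arcSet_iff.mpr hor)
        rw [this]; exact hπ'
      · intro hx
        exact Finset.mem_biUnion.mpr ⟨π, hx, by simp [arcSet]⟩
    have hU2 : ∀ π ∈ M, (π.2 ∈ U ↔ π ∈ Mr) := by
      intro π hπ
      constructor
      · intro hx
        obtain ⟨π', hπ', hor⟩ := hUmem π.2 hx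
        have : π = π' := hshare π hπ π' (hMrsub hπ') π.2
          (mem_arcSet_iff.mpr (Or.inr rfl)) (mem_arcSet_iff.mpr hor)
        rw [this]; exact hπ'
      · intro hx
        exact Finset.mem_biUnion.mpr ⟨π, hx, mem_arcSet_iff.mpr (Or.inr rfl)⟩
    have hB0x : ∀ x : ℕ, x ∈ B0 ↔ 1 ≤ x ∧ x ≤ p := by
      intro x; rw [hB0]; simp [Finset.mem_Icc]
    have hA1 : ∀ π ∈ M, (π.1 ∈ Astar ↔ π ∉ Mr) := by
      intro π hπ
      have hc := hcross π hπ
      have hb : π.1 ∈ B0 := (hB0x π.1).mpr (by omega)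
      rw [hAstar, Finset.mem_symmDiff]
      have := hU1 π hπ
      tauto
    have hA2 : ∀ π ∈ M, (π.2 ∈ Astar ↔ π ∈ Mr) := by
      intro π hπ
      have hc := hcross π hπ
      have hb : π.2 ∉ B0 := by rw [hB0x]; omega
      rw [hAstar, Finset.mem_symmDiff]
      have := hU2 π hπ
      tauto
    have hUsub : U ⊆ Finset.Icc 1 (p + q) := by
      intro x hx
      obtain ⟨π, hπ, hor⟩ := hUmem x hx
      have := hcross π (hMrsub hπ)
      simp only [Finset.mem_Icc]
      omega
    have hAsub : Astar ⊆ Finset.Icc 1 (p + q) := by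
      intro x hx
      rw [hAstar, Finset.mem_symmDiff] at hx
      rcases hx with ⟨hx, _⟩ | ⟨hx, _⟩
      · rw [hB0x] at hx; simp only [Finset.mem_Icc]; omega
      · exact hUsub hx
    have hMrdisj : ∀ a ∈ Mr, ∀ b ∈ Mr, a ≠ b → Disjoint (arcSet a) (arcSet b) :=
      fun a ha b hb hab => c3 a (hMrsub ha) b (hMrsub hb) hab
    have hUcard : U.card = 2 * Mr.card := by
      rw [hUdef, Finset.card_biUnion hMrdisj]
      rw [Finset.sum_congr rfl
        (fun π hπ => arcSet_card (ne_of_lt (c2 π (hMrsub hπ)).2.1))]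
      simp [mul_comm]
    have hBUeq : B0 ∩ U = Mr.biUnion (fun π => {π.1}) := by
      ext x
      simp only [Finset.mem_inter, Finset.mem_biUnion, mem_singleton]
      constructor
      · rintro ⟨hxB, hxU⟩
        obtain ⟨π, hπ, hor⟩ := hUmem x hxU
        have hc := hcross π (hMrsub hπ)
        rw [hB0x] at hxB
        refine ⟨π, hπ, ?_⟩
        omega
      · rintro ⟨π, hπ, rfl⟩
        have hc := hcross π (hMrsub hπ)
        refine ⟨(hB0x π.1).mpr (by omega), ?_⟩
        exact Finset.mem_biUnion.mpr ⟨π, hπ, by simp [arcSet]⟩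
    have hBUcard : (B0 ∩ U).card = Mr.card := by
      rw [hBUeq, Finset.card_biUnion]
      · simp
      · intro a ha b hb hab
        simp only [Finset.disjoint_singleton]
        intro he
        exact hab (hshare a (hMrsub ha) b (hMrsub hb) a.1
          (mem_arcSet_iff.mpr (Or.inl rfl)) (mem_arcSet_iff.mpr (Or.inl he)))
    have hB0card : B0.card = p := by rw [hB0, Nat.card_Icc]; omega
    have hAcard : Astar.card = p := by
      have := card_symmDiff_par B0 U
      rw [hBUcard, hUcard, hB0card] at this
      rw [hAstar] at *
      omega
    have hAtop : Astar ∩ (Finset.Icc (p + 1) (p + q)) = R := by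
      ext x
      simp only [Finset.mem_inter]
      constructor
      · rintro ⟨hxA, hxt⟩
        have hxB : x ∉ B0 := by
          rw [hB0x]
          simp only [Finset.mem_Icc] at hxt
          omega
        rw [hAstar, Finset.mem_symmDiff] at hxA
        have hxU : x ∈ U := by tauto
        obtain ⟨π, hπ, hor⟩ := hUmem x hxU
        have hc := hcross π (hMrsub hπ)
        have hx2 : x = π.2 := by
          simp only [Finset.mem_Icc] at hxt
          omega
        rw [hx2]
        exact (Finset.mem_filter.mp hπ).2
      · intro hxR
        have hxt : x ∈ (Finset.Icc (p + 1) (p + q)) := hRtop hxR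
        obtain ⟨π, hπ, rfl⟩ := Finset.mem_image.mp (by rw [← htopeq]; exact hxt)
        have hπr : π ∈ Mr := Finset.mem_filter.mpr ⟨hπ, hxR⟩
        exact ⟨(hA2 π hπ).mpr hπr, hxt⟩
    have hIccmem : ∀ π ∈ M, π.1 ∈ Finset.Icc 1 (p + q) ∧ π.2 ∈ Finset.Icc 1 (p + q) := by
      intro π hπ
      have := hcross π hπ
      constructor <;> (simp only [Finset.mem_Icc]; omega)
    have hFeAstar : IsFeasibleMatching p q Astar M := by
      refine ⟨c1, c2, c3, ?_, c5, c6⟩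
      intro π hπ
      have hne : π.1 ≠ π.2 := ne_of_lt (c2 π hπ).2.1
      have h1 := hA1 π hπ
      have h2 := hA2 π hπ
      have hI := hIccmem π hπ
      constructor
      · rw [show (arcSet π : Finset ℕ) = {π.1, π.2} from rfl, pair_inter_card _ hne]
        tauto
      · rw [show (arcSet π : Finset ℕ) = {π.1, π.2} from rfl, pair_inter_card _ hne]
        simp only [Finset.mem_sdiff, hI.1, hI.2, true_and]
        tauto
    have hB0Fe : IsFeasibleMatching p q B0 M := by
      refine ⟨c1, c2, c3, ?_, c5, c6⟩
      intro π hπ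
      have hne : π.1 ≠ π.2 := ne_of_lt (c2 π hπ).2.1
      have hc := hcross π hπ
      have hb1 : π.1 ∈ B0 := (hB0x π.1).mpr (by omega)
      have hb2 : π.2 ∉ B0 := by rw [hB0x]; omega
      have hI := hIccmem π hπ
      constructor
      · rw [show (arcSet π : Finset ℕ) = {π.1, π.2} from rfl, pair_inter_card _ hne]
        tauto
      · rw [show (arcSet π : Finset ℕ) = {π.1, π.2} from rfl, pair_inter_card _ hne]
        simp only [Finset.mem_sdiff, hI.1, hI.2, true_and]
        tauto
    have hAstarℬ : Astar ∈ ℬ := (hmemℬ Astar).mpr ⟨hAsub, hAcard, hAtop⟩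
    -- uniqueness
    have huniq : ∀ A : Finset ℕ, A ∈ ℬ → IsFeasibleMatching p q A M → A = Astar := by
      intro A hAℬ hFe
      obtain ⟨hAsub', hAcard', hAtop'⟩ := (hmemℬ A).mp hAℬ
      have hfr := freeMem hAsub' hAcard' c1 c3 (fun π hπ => (hFe.2.2.2.1 π hπ).2)
      ext x
      by_cases hxI : x ∈ Finset.Icc 1 (p + q)
      · by_cases hxf : ∀ π ∈ M, x ∉ arcSet π
        · have h1 := hfr x hxI hxf
          have hxp : x ≤ p := by
            by_contra hxp
            have hxt : x ∈ (Finset.Icc (p + 1) (p + q)) := by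
              simp only [Finset.mem_Icc]
              simp only [Finset.mem_Icc] at hxI
              omega
            obtain ⟨π, hπ, rfl⟩ := Finset.mem_image.mp (by rw [← htopeq]; exact hxt)
            exact hxf π hπ (mem_arcSet_iff.mpr (Or.inr rfl))
          have h2 : x ∈ Astar := by
            rw [hAstar, Finset.mem_symmDiff]
            left
            refine ⟨(hB0x x).mpr ?_, ?_⟩
            · simp only [Finset.mem_Icc] at hxI; omega
            · intro hxU
              obtain ⟨π, hπ, hor⟩ := hUmem x hxU
              exact hxf π (hMrsub hπ) (mem_arcSet_iff.mpr hor)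
          simp [h1, h2]
        · push_neg at hxf
          obtain ⟨π, hπ, hxarc⟩ := hxf
          have hc := hcross π hπ
          have hne : π.1 ≠ π.2 := by omega
          have hpair := (pair_inter_card A hne).mp (hFe.2.2.2.1 π hπ).1
          have ht2 : π.2 ∈ (Finset.Icc (p + 1) (p + q)) := by simp only [Finset.mem_Icc]; omega
          have hAx2 : π.2 ∈ A ↔ π.2 ∈ R := by
            rw [← hAtop']
            simp only [Finset.mem_inter]
            exact ⟨fun h => ⟨h, ht2⟩, fun h => h.1⟩
          have hMrx : π ∈ Mr ↔ π.2 ∈ R := by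
            rw [hMr, Finset.mem_filter]
            exact ⟨fun h => h.2, fun h => ⟨hπ, h⟩⟩
          have hA1' := hA1 π hπ
          have hA2' := hA2 π hπ
          rw [mem_arcSet_iff] at hxarc
          rcases hxarc with rfl | rfl
          · rw [hpair, hA1', hMrx]
            exact not_congr hAx2
          · rw [hAx2, hA2', hMrx]
      · have h1 : x ∉ A := fun h => hxI (hAsub' h)
        have h2 : x ∉ Astar := fun h => hxI (hAsub h)
        simp [h1, h2]
    -- parity of Astar
    have hMrodd : ∀ π ∈ Mr, (π.1 + π.2) % 2 = 1 :=
      fun π hπ => Nat.odd_iff.mp (hodd π (hMrsub hπ))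
    have hsumU : (∑ x ∈ U, x) % 2 = Mr.card % 2 := by
      rw [hUdef, Finset.sum_biUnion hMrdisj]
      have hsp : ∀ π ∈ Mr, (∑ x ∈ arcSet π, x) = π.1 + π.2 := fun π hπ =>
        Finset.sum_pair (ne_of_lt (c2 π (hMrsub hπ)).2.1)
      rw [Finset.sum_congr rfl hsp]
      rw [Finset.sum_nat_mod]
      rw [Finset.sum_congr rfl (fun π hπ => hMrodd π hπ)]
      simp [Finset.sum_const]
    have hP0rep : ∀ π ∈ P0, ∃ i, 1 ≤ i ∧ i ≤ q ∧ π.1 = p - i + 1 ∧ π.2 = p + i := by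
      intro π hπ
      obtain ⟨i, hi, rfl⟩ := Finset.mem_image.mp (hP0 hπ)
      simp only [Finset.mem_Icc] at hi
      exact ⟨i, hi.1, hi.2, rfl, rfl⟩
    have hP0odd : ∀ π ∈ P0, (π.1 + π.2) % 2 = 1 := by
      intro π hπ
      obtain ⟨i, h1, h2, he1, he2⟩ := hP0rep π hπ
      omega
    have hP0ne2 : ∀ π ∈ P0, π.1 ≠ π.2 := by
      intro π hπ
      obtain ⟨i, h1, h2, he1, he2⟩ := hP0rep π hπ
      omega
    have hP0disj : ∀ a ∈ P0, ∀ b ∈ P0, a ≠ b → Disjoint (arcSet a) (arcSet b) := by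
      intro a ha b hb hab
      obtain ⟨i, hi1, hi2, hie1, hie2⟩ := hP0rep a ha
      obtain ⟨j, hj1, hj2, hje1, hje2⟩ := hP0rep b hb
      have hij : i ≠ j := by
        intro he
        apply hab
        exact Prod.ext_iff.mpr ⟨by omega, by omega⟩
      rw [Finset.disjoint_left]
      intro x hx hx'
      simp only [arcSet, mem_insert, mem_singleton] at hx hx'
      omega
    have hsumU0 : (∑ x ∈ P0.biUnion arcSet, x) % 2 = P0.card % 2 := by
      rw [Finset.sum_biUnion hP0disj]
      have hsp : ∀ π ∈ P0, (∑ x ∈ arcSet π, x) = π.1 + π.2 := fun π hπ =>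
        Finset.sum_pair (hP0ne2 π hπ)
      rw [Finset.sum_congr rfl hsp]
      rw [Finset.sum_nat_mod]
      rw [Finset.sum_congr rfl (fun π hπ => hP0odd π hπ)]
      simp [Finset.sum_const]
    have hMrR : Mr.card = R.card := by
      have himg : Mr.image (fun π => π.2) = R := by
        ext r
        simp only [Finset.mem_image]
        constructor
        · rintro ⟨π, hπ, rfl⟩
          exact (Finset.mem_filter.mp hπ).2
        · intro hr
          obtain ⟨π, hπ, rfl⟩ := Finset.mem_image.mp (by rw [← htopeq]; exact hRtop hr)
          exact ⟨π, Finset.mem_filter.mpr ⟨hπ, hr⟩, rfl⟩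
      rw [← himg, Finset.card_image_of_injOn]
      intro π hπ π' hπ' he
      have he2 : π.2 = π'.2 := he
      exact hshare π (hMrsub hπ) π' (hMrsub hπ') π.2
        (mem_arcSet_iff.mpr (Or.inr rfl)) (mem_arcSet_iff.mpr (Or.inr he2))
    have hP0R : P0.card = R.card := by
      have himg : P0.image (fun π => π.2) = R := by
        ext r
        simp only [Finset.mem_image]
        constructor
        · rintro ⟨π, hπ, rfl⟩
          obtain ⟨i, hi1, hi2, hie1, hie2⟩ := hP0rep π hπ
          have hrt : π.2 ∈ Finset.Icc (p + 1) (p + q) := by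
            simp only [Finset.mem_Icc]; omega
          have hrB0 : π.2 ∉ B0 := by rw [hB0x]; omega
          have hrU0 : π.2 ∈ P0.biUnion arcSet :=
            Finset.mem_biUnion.mpr ⟨π, hπ, mem_arcSet_iff.mpr (Or.inr rfl)⟩
          rw [hR]
          refine Finset.mem_inter.mpr ⟨?_, hrt⟩
          rw [hB1, Finset.mem_symmDiff]
          tauto
        · intro hr
          have hrt : r ∈ (Finset.Icc (p + 1) (p + q)) := hRtop hr
          have hrB0 : r ∉ B0 := by
            rw [hB0x]
            simp only [Finset.mem_Icc] at hrt
            omega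
          have hrB1 : r ∈ B1 := by
            rw [hR] at hr
            exact (Finset.mem_inter.mp hr).1
          rw [hB1, Finset.mem_symmDiff] at hrB1
          have hrU0 : r ∈ P0.biUnion arcSet := by tauto
          obtain ⟨π, hπ, hor⟩ := Finset.mem_biUnion.mp hrU0
          obtain ⟨i, hi1, hi2, hie1, hie2⟩ := hP0rep π hπ
          simp only [arcSet, mem_insert, mem_singleton] at hor
          refine ⟨π, hπ, ?_⟩
          show π.2 = r
          simp only [Finset.mem_Icc] at hrt
          omega
      rw [← himg, Finset.card_image_of_injOn]
      intro π hπ π' hπ' he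
      obtain ⟨i, hi1, hi2, hie1, hie2⟩ := hP0rep π hπ
      obtain ⟨j, hj1, hj2, hje1, hje2⟩ := hP0rep π' hπ'
      have he2 : π.2 = π'.2 := he
      exact Prod.ext_iff.mpr ⟨by omega, by omega⟩
    have hparAstar : ¬ Odd ((∑ a ∈ Astar, a) + ∑ b ∈ B1, b) := by
      have hsA := sum_symmDiff_par B0 U
      have hsB := sum_symmDiff_par B0 (P0.biUnion arcSet)
      rw [← hAstar] at hsA
      rw [← hB1] at hsB
      rw [Nat.odd_iff]
      omega
    -- putting it together
    have hXempty : ((ℬ.filter (fun A => Odd ((∑ a ∈ A, a) + ∑ b ∈ B1, b))).filter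
        (fun A => IsFeasibleMatching p q A M)) = ∅ := by
      rw [Finset.filter_eq_empty_iff]
      intro A hA hFe
      rw [Finset.mem_filter] at hA
      have := huniq A hA.1 hFe
      rw [this] at hA
      exact hparAstar hA.2
    have hYone : ((ℬ.filter (fun A => ¬ Odd ((∑ a ∈ A, a) + ∑ b ∈ B1, b))).filter
        (fun A => IsFeasibleMatching p q A M)) = {Astar} := by
      ext A
      simp only [Finset.mem_filter, mem_singleton]
      constructor
      · rintro ⟨⟨hAℬ, _⟩, hFe⟩
        exact huniq A hAℬ hFe
      · rintro rfl
        exact ⟨⟨hAstarℬ, hparAstar⟩, hFeAstar⟩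
    rw [Finset.filter_insert, if_pos hB0Fe, hXempty, hYone]
    simp
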